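/- Let λ > 0, m ∈ ℝ with |m| < 1, and define g(w) = (1−w)^{−1+(1−m)/λ} (1+w)^{−1+(1+m)/λ} on (−1,1). Then g satisfies the stationary Fokker-Planck equation (γ w − γ m) g(w) + (σ²/2) d/dw[(1−w²) g(w)] = 0 for all w ∈ (−1,1), where λ = σ²/γ with γ, σ² > 0. -/

import Mathlib

open Real Set

theorem beta_steady_state_solves_FP
    (γ σ2 m : ℝ) (hγ : 0 < γ) (hσ : 0 < σ2) (hm : |m| < 1) :
    ∀ w ∈ Ioo (-1 : ℝ) 1,
      (γ * w - γ * m) *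
          ((1 - w) ^ (-1 + (1 - m) / (σ2 / γ)) * (1 + w) ^ (-1 + (1 + m) / (σ2 / γ))) +
        σ2 / 2 *
          deriv (fun v : ℝ =>
            (1 - v ^ 2) *
              ((1 - v) ^ (-1 + (1 - m) / (σ2 / γ)) * (1 + v) ^ (-1 + (1 + m) / (σ2 / γ)))) w
        = 0 := by
  intro w hw
  obtain ⟨hw1, hw2⟩ := hw
  set lam := σ2 / γ with hlam
  have hlam0 : 0 < lam := div_pos hσ hγ
  have h1w : (0:ℝ) < 1 - w := by linarith
  have h2w : (0:ℝ) < 1 + w := by linarith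
  set p := (1 - m) / lam with hpdef
  set q := (1 + m) / lam with hqdef
  have hev : (fun v : ℝ => (1 - v ^ 2) * ((1 - v) ^ (-1 + p) * (1 + v) ^ (-1 + q)))
      =ᶠ[nhds w] fun v : ℝ => (1 - v) ^ p * (1 + v) ^ q := by
    filter_upwards [Ioo_mem_nhds hw1 hw2] with v hv
    have h1 : (0:ℝ) < 1 - v := by linarith [hv.2]
    have h2 : (0:ℝ) < 1 + v := by linarith [hv.1]
    have hsq : (1 - v ^ 2) = (1 - v) * (1 + v) := by ring
    rw [hsq, show -1 + p = p - 1 from by ring, show -1 + q = q - 1 from by ring,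
        Real.rpow_sub_one h1.ne', Real.rpow_sub_one h2.ne']
    field_simp
  rw [hev.deriv_eq]
  have hd1 : HasDerivAt (fun v : ℝ => (1 - v) ^ p) (-1 * p * (1 - w) ^ (p - 1)) w := by
    have h : HasDerivAt (fun v : ℝ => 1 - v) (-1) w := by
      simpa using (hasDerivAt_id w).const_sub 1
    exact h.rpow_const (Or.inl h1w.ne')
  have hd2 : HasDerivAt (fun v : ℝ => (1 + v) ^ q) (1 * q * (1 + w) ^ (q - 1)) w := by
    have h : HasDerivAt (fun v : ℝ => 1 + v) 1 w := by
      simpa using (hasDerivAt_id w).const_add 1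
    exact h.rpow_const (Or.inl h2w.ne')
  rw [(hd1.fun_mul hd2).deriv]
  have e1 : (1 - w) ^ p = (1 - w) ^ (p - 1) * (1 - w) := by
    rw [Real.rpow_sub_one h1w.ne']; field_simp
  have e2 : (1 + w) ^ q = (1 + w) ^ (q - 1) * (1 + w) := by
    rw [Real.rpow_sub_one h2w.ne']; field_simp
  rw [e1, e2, show -1 + p = p - 1 from by ring, show -1 + q = q - 1 from by ring]
  have hσγ : σ2 = γ * lam := by rw [hlam, mul_div_assoc']; exact (mul_div_cancel_left₀ σ2 hγ.ne').symm
  have hp : p * lam = 1 - m := by rw [hpdef]; field_simp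
  have hq : q * lam = 1 + m := by rw [hqdef]; field_simp
  have key : γ * w - γ * m + γ * lam / 2 * (-p * (1 + w) + q * (1 - w)) = 0 := by
    linear_combination (-(γ/2) * (1+w)) * hp + (γ/2 * (1-w)) * hq
  rw [hσγ]
  linear_combination ((1-w) ^ (p-1) * (1+w) ^ (q-1)) * key
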